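/- Let τ be a nonzero complex number and let h(τ) be the 3×3 complex matrix !![0, 0, τ; 1, 0, 0; 0, 1, 0]. For s₁, …, s₁₀ ∈ ℂ let S₁ = 1 + s₁E₃₁, S₂ = 1 + s₂E₃₂, S₃ = 1 + s₃E₁₂, S₄ = 1 + s₄E₁₃, S₅ = 1 + s₅E₂₃, S₆ = 1 + s₆E₂₁, S₇ = 1 + s₇E₃₁, S₈ = 1 + s₈E₃₂, S₉ = 1 + s₉E₁₂, S₁₀ = 1 + s₁₀E₁₃, where E_{ij} is the 3×3 matrix with a single 1 in position (i,j) and zeros elsewhere. Then there exist s₁, …, s₁₀ ∈ ℂ with h(τ)·S₁₀·S₉·S₈·S₇·S₆·S₅·S₄·S₃·S₂·S₁ = 1 (the identity matrix) if and only if τ = 1. (That is, the Betti moduli space M_B(⟨z^{5/3}⟩, τ) is nonempty if and only if τ = 1.) -/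

import Mathlib

set_option maxHeartbeats 1000000
open Matrix

lemma std02 (s : ℂ) : (1 + Matrix.single 0 2 s : Matrix (Fin 3) (Fin 3) ℂ)
    = !![1,0,s;0,1,0;0,0,1] := by
  ext a b; fin_cases a <;> fin_cases b <;>
    simp [Matrix.single, Matrix.one_apply, Matrix.vecHead, Matrix.vecTail]

lemma std01 (s : ℂ) : (1 + Matrix.single 0 1 s : Matrix (Fin 3) (Fin 3) ℂ)
    = !![1,s,0;0,1,0;0,0,1] := by
  ext a b; fin_cases a <;> fin_cases b <;>
    simp [Matrix.single, Matrix.one_apply, Matrix.vecHead, Matrix.vecTail]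

lemma std12 (s : ℂ) : (1 + Matrix.single 1 2 s : Matrix (Fin 3) (Fin 3) ℂ)
    = !![1,0,0;0,1,s;0,0,1] := by
  ext a b; fin_cases a <;> fin_cases b <;>
    simp [Matrix.single, Matrix.one_apply, Matrix.vecHead, Matrix.vecTail]

lemma std10 (s : ℂ) : (1 + Matrix.single 1 0 s : Matrix (Fin 3) (Fin 3) ℂ)
    = !![1,0,0;s,1,0;0,0,1] := by
  ext a b; fin_cases a <;> fin_cases b <;>
    simp [Matrix.single, Matrix.one_apply, Matrix.vecHead, Matrix.vecTail]

lemma std20 (s : ℂ) : (1 + Matrix.single 2 0 s : Matrix (Fin 3) (Fin 3) ℂ)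
    = !![1,0,0;0,1,0;s,0,1] := by
  ext a b; fin_cases a <;> fin_cases b <;>
    simp [Matrix.single, Matrix.one_apply, Matrix.vecHead, Matrix.vecTail]

lemma std21 (s : ℂ) : (1 + Matrix.single 2 1 s : Matrix (Fin 3) (Fin 3) ℂ)
    = !![1,0,0;0,1,0;0,s,1] := by
  ext a b; fin_cases a <;> fin_cases b <;>
    simp [Matrix.single, Matrix.one_apply, Matrix.vecHead, Matrix.vecTail]

/-- the Betti moduli space `M_B(⟨z^{5/3}⟩, τ)` is nonempty iff `τ = 1`: there
exist ten unipotent Stokes matrices `Sᵢ = 1 + sᵢ E_{jᵢ kᵢ}` with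
`h(τ)·S₁₀·S₉·S₈·S₇·S₆·S₅·S₄·S₃·S₂·S₁ = 1`, where `h(τ) = !![0,0,τ; 1,0,0; 0,1,0]`,
if and only if `τ = 1`. -/
theorem mB_five_thirds_nonempty_iff
    (τ : ℂ) (hτ : τ ≠ 0) :
    (∃ s₁ s₂ s₃ s₄ s₅ s₆ s₇ s₈ s₉ s₁₀ : ℂ,
      (!![0, 0, τ; 1, 0, 0; 0, 1, 0] : Matrix (Fin 3) (Fin 3) ℂ) *
        (1 + Matrix.single 0 2 s₁₀) *
        (1 + Matrix.single 0 1 s₉) *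
        (1 + Matrix.single 2 1 s₈) *
        (1 + Matrix.single 2 0 s₇) *
        (1 + Matrix.single 1 0 s₆) *
        (1 + Matrix.single 1 2 s₅) *
        (1 + Matrix.single 0 2 s₄) *
        (1 + Matrix.single 0 1 s₃) *
        (1 + Matrix.single 2 1 s₂) *
        (1 + Matrix.single 2 0 s₁) = 1) ↔ τ = 1 := by
  constructor
  · rintro ⟨s₁, s₂, s₃, s₄, s₅, s₆, s₇, s₈, s₉, s₁₀, heq⟩
    rw [std02, std01, std21, std20, std10, std12, std02, std01, std21, std20] at heq
    have hd := congrArg Matrix.det heq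
    simp [Matrix.det_mul, Matrix.det_fin_three] at hd
    linear_combination hd
  · rintro rfl
    refine ⟨1, 0, 1, 0, 1, -1, 0, -1, 0, -1, ?_⟩
    rw [std02, std01, std21, std20, std10, std12, std02, std01, std21, std20,
      Matrix.one_fin_three]
    simp [Matrix.mul_fin_three]
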